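/- arXiv:2510.04556 — 2 statements merged into one kernel-verified Lean document; each statement's English description precedes it below -/
import Mathlib

section
/- Let (Y, X) be a random pair with Y non-negative, 0 < E[Y] < ∞, and let mu-hat be a regression function such that mu-hat(X) is non-negative with finite mean and continuous cumulative distribution function F_{mu-hat(X)}, and such that mu-hat is auto-calibrated for Y, i.e. E[Y | mu-hat(X)] = mu-hat(X) almost surely. Then the area under the cumulative accuracy profile of the model satisfies ∫_0^1 CAP_{Y, mu-hat(X)}(alpha) d alpha − 1/2 = (1/E[Y]) E[ mu-hat(X) · F_{mu-hat(X)}(mu-hat(X)) ] − 1/2. -/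
open MeasureTheory ProbabilityTheory Filter Set

/-- The cumulative distribution function of a measure on `ℝ`. -/
noncomputable def cdfOf (μ : Measure ℝ) (y : ℝ) : ℝ := (μ (Set.Iic y)).toReal

/-- The left-continuous generalized inverse of a CDF: `F⁻¹(p) = inf {t | p ≤ F t}`. -/
noncomputable def leftContInv (F : ℝ → ℝ) (p : ℝ) : ℝ := sInf {t : ℝ | p ≤ F t}


section aux
variable {ν : Measure ℝ} [IsProbabilityMeasure ν]

lemma cdfOf_eq_cdf : cdfOf ν = cdf ν := by
  funext x; rw [cdf_eq_real]; rfl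

lemma cdfOf_mono : Monotone (cdfOf ν) := by rw [cdfOf_eq_cdf]; exact monotone_cdf _

lemma cdfOf_nonneg (x : ℝ) : 0 ≤ cdfOf ν x := by rw [cdfOf_eq_cdf]; exact cdf_nonneg _ x

lemma cdfOf_le_one (x : ℝ) : cdfOf ν x ≤ 1 := by rw [cdfOf_eq_cdf]; exact cdf_le_one _ x

lemma cdfOf_tendsto_atBot : Tendsto (cdfOf ν) atBot (nhds 0) := by
  rw [cdfOf_eq_cdf]; exact tendsto_cdf_atBot _

lemma cdfOf_tendsto_atTop : Tendsto (cdfOf ν) atTop (nhds 1) := by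
  rw [cdfOf_eq_cdf]; exact tendsto_cdf_atTop _

lemma setS_nonempty {β : ℝ} (hβ : β < 1) : {t : ℝ | β ≤ cdfOf ν t}.Nonempty := by
  have h := (cdfOf_tendsto_atTop (ν := ν)).eventually (eventually_gt_nhds hβ)
  rcases h.exists with ⟨t, ht⟩
  exact ⟨t, ht.le⟩

lemma setS_bddBelow {β : ℝ} (hβ : 0 < β) : BddBelow {t : ℝ | β ≤ cdfOf ν t} := by
  have h := (cdfOf_tendsto_atBot (ν := ν)).eventually (eventually_lt_nhds hβ)
  rcases h.exists with ⟨t, ht⟩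
  refine ⟨t, fun s hs => ?_⟩
  by_contra hlt
  exact absurd (le_trans hs (cdfOf_mono (le_of_not_ge hlt))) (not_le.2 ht)

end aux

section aux2
variable {ν : Measure ℝ} [IsProbabilityMeasure ν]

lemma leftContInv_lt_of_lt_cdf (hcont : Continuous (cdfOf ν)) {β z : ℝ} (hβ : 0 < β)
    (h : β < cdfOf ν z) : leftContInv (cdfOf ν) β < z := by
  have hmem : {t : ℝ | β < cdfOf ν t} ∈ nhds z :=
    (isOpen_lt continuous_const hcont).mem_nhds h
  have : ∃ t ∈ Iio z, β < cdfOf ν t := by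
    have := (eventually_nhdsWithin_of_eventually_nhds (s := Iio z)
      (Filter.eventually_iff_exists_mem.2 ⟨_, hmem, fun t ht => ht⟩)).and
      self_mem_nhdsWithin
    rcases this.exists with ⟨t, h1, h2⟩
    exact ⟨t, h2, h1⟩
  rcases this with ⟨t, ht, hβt⟩
  exact lt_of_le_of_lt (csInf_le (setS_bddBelow hβ) hβt.le) ht

lemma le_cdf_of_leftContInv_lt {β z : ℝ} (hβ0 : 0 < β) (hβ1 : β < 1)
    (h : leftContInv (cdfOf ν) β < z) : β ≤ cdfOf ν z := by
  rcases (csInf_lt_iff (setS_bddBelow hβ0) (setS_nonempty hβ1)).1 h with ⟨t, ht, htz⟩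
  exact le_trans ht (cdfOf_mono htz.le)

lemma singleton_null (hcont : Continuous (cdfOf ν)) (a : ℝ) : ν {a} = 0 := by
  have key : ∀ t < a, ν {a} ≤ ENNReal.ofReal (cdfOf ν a - cdfOf ν t) := by
    intro t ht
    have hsub : {a} ⊆ Ioc t a := by
      intro x hx; rcases hx with rfl; exact ⟨ht, le_rfl⟩
    refine le_trans (measure_mono hsub) ?_
    have : ν (Ioc t a) = ν (Iic a) - ν (Iic t) := by
      rw [← Iic_sdiff_Iic]
      exact measure_diff (Iic_subset_Iic.2 ht.le) measurableSet_Iic.nullMeasurableSet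
        (measure_ne_top ν _)
    rw [this]
    have h1 : ν (Iic a) = ENNReal.ofReal (cdfOf ν a) := by
      rw [cdfOf_eq_cdf, ofReal_cdf]
    have h2 : ν (Iic t) = ENNReal.ofReal (cdfOf ν t) := by
      rw [cdfOf_eq_cdf, ofReal_cdf]
    rw [h1, h2]
    exact tsub_le_iff_right.2 (by
      rw [← ENNReal.ofReal_add (by linarith [cdfOf_mono (ν := ν) ht.le]) (cdfOf_nonneg t)]
      exact ENNReal.ofReal_le_ofReal (by ring_nf; exact le_rfl))
  -- now let t → a from the left
  have htend : Tendsto (fun t => ENNReal.ofReal (cdfOf ν a - cdfOf ν t))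
      (nhdsWithin a (Iio a)) (nhds 0) := by
    have : Tendsto (fun t => cdfOf ν a - cdfOf ν t) (nhdsWithin a (Iio a)) (nhds 0) := by
      have : Tendsto (cdfOf ν) (nhdsWithin a (Iio a)) (nhds (cdfOf ν a)) := (hcont.tendsto a).mono_left nhdsWithin_le_nhds
      have h2 := (tendsto_const_nhds (x := cdfOf ν a) (f := nhdsWithin a (Iio a))).sub this
      simpa using h2
    simpa using (ENNReal.tendsto_ofReal this)
  have hev : ∀ᶠ t in nhdsWithin a (Iio a), ν {a} ≤ ENNReal.ofReal (cdfOf ν a - cdfOf ν t) := by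
    filter_upwards [self_mem_nhdsWithin] with t ht using key t ht
  exact le_antisymm (ge_of_tendsto htend hev) zero_le
end aux2

section aux3
variable {ν : Measure ℝ} [IsProbabilityMeasure ν]

lemma level_null (hcont : Continuous (cdfOf ν)) {β : ℝ} (hβ0 : 0 < β) (hβ1 : β < 1) :
    ν {z | cdfOf ν z = β} = 0 := by
  set A := {z | cdfOf ν z = β} with hA
  rcases eq_empty_or_nonempty A with h | hne
  · rw [h]; exact measure_empty
  have hclosed : IsClosed A := isClosed_eq hcont continuous_const
  have hbdd : BddBelow A := (setS_bddBelow hβ0).mono (fun z hz => hz.ge)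
  have hbddA : BddAbove A := by
    have h := (cdfOf_tendsto_atTop (ν := ν)).eventually (eventually_gt_nhds hβ1)
    rcases h.exists with ⟨t, ht⟩
    refine ⟨t, fun z hz => ?_⟩
    by_contra hlt
    exact absurd (cdfOf_mono (le_of_not_ge hlt) : cdfOf ν t ≤ cdfOf ν z)
      (by rw [hz]; exact not_le.2 ht)
  set a := sInf A
  set b := sSup A
  have ha : a ∈ A := hclosed.csInf_mem hne hbdd
  have hb : b ∈ A := hclosed.csSup_mem hne hbddA
  have hsub : A ⊆ Icc a b := fun z hz => ⟨csInf_le hbdd hz, le_csSup hbddA hz⟩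
  have hIoc : ν (Ioc a b) = 0 := by
    rw [← Iic_sdiff_Iic, measure_diff (Iic_subset_Iic.2 (csInf_le_csSup hne hbdd hbddA))
      measurableSet_Iic.nullMeasurableSet (measure_ne_top ν _)]
    have h1 : ν (Iic b) = ENNReal.ofReal (cdfOf ν b) := by rw [cdfOf_eq_cdf, ofReal_cdf]
    have h2 : ν (Iic a) = ENNReal.ofReal (cdfOf ν a) := by rw [cdfOf_eq_cdf, ofReal_cdf]
    rw [h1, h2, ha, hb, tsub_self]
  have : ν A ≤ ν ({a} ∪ Ioc a b) := by
    refine measure_mono (fun z hz => ?_)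
    rcases eq_or_lt_of_le (hsub hz).1 with h | h
    · exact Or.inl h.symm
    · exact Or.inr ⟨h, (hsub hz).2⟩
  refine le_antisymm (le_trans this ?_) zero_le
  refine le_trans (measure_union_le _ _) ?_
  rw [singleton_null hcont a, hIoc, add_zero]
end aux3

theorem main_aux {Ω : Type*} [MeasureSpace Ω] [IsProbabilityMeasure (ℙ : Measure Ω)]
    (Y Z : Ω → ℝ) (hZ : Measurable Z)
    (hYint : Integrable Y ℙ) (hZint : Integrable Z ℙ)
    (hcont : Continuous (cdfOf (Measure.map Z ℙ)))
    (hac : ℙ[Y | MeasurableSpace.comap Z Real.measurableSpace] =ᵐ[ℙ] Z) :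
    (∫ α in Set.Ioo (0:ℝ) 1,
        ∫ ω in {ω | leftContInv (cdfOf (Measure.map Z ℙ)) (1 - α) < Z ω}, Y ω ∂ℙ)
      = ∫ ω, Z ω * cdfOf (Measure.map Z ℙ) (Z ω) ∂ℙ := by
  set ν : Measure ℝ := Measure.map Z ℙ with hν
  haveI : IsProbabilityMeasure ν := Measure.isProbabilityMeasure_map hZ.aemeasurable
  set F : ℝ → ℝ := cdfOf ν with hFdef
  have hFm : Measurable F := hcont.measurable
  have hGm : Measurable (fun ω => F (Z ω)) := hFm.comp hZ
  -- level sets are null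
  have hlevel : ∀ β : ℝ, 0 < β → β < 1 → ℙ {ω | F (Z ω) = β} = 0 := by
    intro β h0 h1
    have h : {ω | F (Z ω) = β} = Z ⁻¹' {z | F z = β} := rfl
    rw [h, ← Measure.map_apply hZ ((isClosed_eq hcont continuous_const).measurableSet)]
    exact level_null hcont h0 h1
  -- ae set equality
  have hsets : ∀ β : ℝ, 0 < β → β < 1 →
      ({ω | leftContInv F β < Z ω} : Set Ω) =ᵐ[ℙ] {ω | β < F (Z ω)} := by
    intro β h0 h1
    rw [Filter.eventuallyEq_set, MeasureTheory.ae_iff]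
    refine measure_mono_null (fun ω hω => ?_) (hlevel β h0 h1)
    simp only [Set.mem_setOf_eq] at hω ⊢
    by_contra hne
    rcases lt_or_gt_of_ne hne with hlt | hgt
    · exact hω ⟨fun h => absurd (le_cdf_of_leftContInv_lt h0 h1 h) (not_le.2 hlt),
        fun h => absurd h (not_lt.2 hlt.le)⟩
    · exact hω ⟨fun _ => hgt, fun _ => leftContInv_lt_of_lt_cdf hcont h0 hgt⟩
  -- conditional expectation step
  have key1 : ∀ β : ℝ, 0 < β → β < 1 →
      ∫ ω in {ω | leftContInv F β < Z ω}, Y ω ∂ℙ = ∫ ω in {ω | β < F (Z ω)}, Z ω ∂ℙ := by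
    intro β h0 h1
    have hm : MeasurableSpace.comap Z Real.measurableSpace ≤ _ := hZ.comap_le
    have hs : MeasurableSet[MeasurableSpace.comap Z Real.measurableSpace]
        {ω | leftContInv F β < Z ω} := ⟨Set.Ioi (leftContInv F β), measurableSet_Ioi, rfl⟩
    calc ∫ ω in {ω | leftContInv F β < Z ω}, Y ω ∂ℙ
        = ∫ ω in {ω | leftContInv F β < Z ω},
            (ℙ[Y | MeasurableSpace.comap Z Real.measurableSpace]) ω ∂ℙ :=
          (setIntegral_condExp hm hYint hs).symm
      _ = ∫ ω in {ω | leftContInv F β < Z ω}, Z ω ∂ℙ :=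
          integral_congr_ae (ae_restrict_of_ae hac)
      _ = ∫ ω in {ω | β < F (Z ω)}, Z ω ∂ℙ := setIntegral_congr_set (hsets β h0 h1)
  -- rewrite integrand on Ioo
  have step2 : (∫ α in Set.Ioo (0:ℝ) 1,
      ∫ ω in {ω | leftContInv F (1 - α) < Z ω}, Y ω ∂ℙ)
      = ∫ α in Set.Ioo (0:ℝ) 1, ∫ ω in {ω | (1 - α) < F (Z ω)}, Z ω ∂ℙ := by
    refine setIntegral_congr_fun measurableSet_Ioo (fun α hα => ?_)
    exact key1 (1 - α) (by linarith [hα.2]) (by linarith [hα.1])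
  -- reflection
  set J : ℝ → ℝ := fun β => ∫ ω in {ω | β < F (Z ω)}, Z ω ∂ℙ with hJ
  have step3 : (∫ α in Set.Ioo (0:ℝ) 1, J (1 - α)) = ∫ β in Set.Ioo (0:ℝ) 1, J β := by
    rw [← integral_Ioc_eq_integral_Ioo, ← integral_Ioc_eq_integral_Ioo,
        ← intervalIntegral.integral_of_le zero_le_one,
        ← intervalIntegral.integral_of_le zero_le_one]
    have h := intervalIntegral.integral_comp_sub_left (a := (0:ℝ)) (b := 1) J 1
    simpa using h
  -- Fubini
  have step4 : (∫ β in Set.Ioo (0:ℝ) 1, J β) = ∫ ω, Z ω * F (Z ω) ∂ℙ := by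
    set π : Measure (ℝ × Ω) := (volume.restrict (Set.Ioo (0:ℝ) 1)).prod ℙ with hπ
    have hfm : Measurable (fun p : ℝ × Ω => if p.1 < F (Z p.2) then Z p.2 else 0) :=
      Measurable.ite (measurableSet_lt measurable_fst (hGm.comp measurable_snd))
        (hZ.comp measurable_snd) measurable_const
    have hmap : Measure.map Prod.snd π = ℙ := by
      rw [hπ, Measure.map_snd_prod]
      simp [Real.volume_Ioo]
    have hbound : Integrable (fun p : ℝ × Ω => Z p.2) π := by
      have h1 : Integrable Z (Measure.map Prod.snd π) := by rw [hmap]; exact hZint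
      exact (integrable_map_measure (by rw [hmap]; exact hZint.1)
        measurable_snd.aemeasurable).1 h1
    have hfint : Integrable (fun p : ℝ × Ω => if p.1 < F (Z p.2) then Z p.2 else 0) π := by
      refine hbound.abs.mono' hfm.aestronglyMeasurable ?_
      filter_upwards with p
      by_cases h : p.1 < F (Z p.2) <;> simp [h, abs_nonneg, le_abs_self, abs_abs, Real.norm_eq_abs]
    calc (∫ β in Set.Ioo (0:ℝ) 1, J β)
        = ∫ β in Set.Ioo (0:ℝ) 1, ∫ ω, (if β < F (Z ω) then Z ω else 0) ∂ℙ := by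
          refine setIntegral_congr_fun measurableSet_Ioo (fun β _ => ?_)
          show (∫ ω in {ω | β < F (Z ω)}, Z ω ∂ℙ) = ∫ ω, (if β < F (Z ω) then Z ω else 0) ∂ℙ
          rw [← integral_indicator (measurableSet_lt measurable_const hGm)]
          congr 1
      _ = ∫ ω, ∫ β in Set.Ioo (0:ℝ) 1, (if β < F (Z ω) then Z ω else 0) ∂ℙ := by
          exact integral_integral_swap hfint
      _ = ∫ ω, Z ω * F (Z ω) ∂ℙ := by
          refine integral_congr_ae (Filter.Eventually.of_forall fun ω => ?_)
          have h0 : (0:ℝ) ≤ F (Z ω) := cdfOf_nonneg _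
          have h1 : F (Z ω) ≤ 1 := cdfOf_le_one _
          have hrw : (fun β => if β < F (Z ω) then Z ω else 0)
              = (Set.Iio (F (Z ω))).indicator (fun _ => Z ω) := by
            funext β; simp [Set.indicator_apply]
          show (∫ β in Set.Ioo (0:ℝ) 1, (if β < F (Z ω) then Z ω else 0)) = Z ω * F (Z ω)
          rw [hrw, setIntegral_indicator measurableSet_Iio, setIntegral_const,
            Set.Ioo_inter_Iio, Real.volume_real_Ioo, min_eq_right h1]
          rw [sub_zero, max_eq_left h0, smul_eq_mul, mul_comm]
  rw [step2]
  rw [show (∫ α in Set.Ioo (0:ℝ) 1, ∫ ω in {ω | (1 - α) < F (Z ω)}, Z ω ∂ℙ)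
      = ∫ α in Set.Ioo (0:ℝ) 1, J (1 - α) from rfl]
  rw [step3, step4]

/-- **Area under the CAP curve of an auto-calibrated model.**
Let `(Y, X)` be a random pair with `Y` non-negative, `0 < E[Y] < ∞`, and let `μ̂` be a
regression function with `μ̂(X)` non-negative, integrable, with continuous CDF
`F_{μ̂(X)}`, auto-calibrated for `Y` (i.e. `E[Y | μ̂(X)] = μ̂(X)` a.s.). Then
`∫_0^1 CAP_{Y,μ̂(X)}(α) dα − 1/2 = (1/E[Y]) E[μ̂(X) · F_{μ̂(X)}(μ̂(X))] − 1/2`,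
where `CAP_{Y,μ̂(X)}(α) = (1/E[Y]) E[Y · 1{μ̂(X) > F_{μ̂(X)}⁻¹(1−α)}]`. -/
theorem area_under_CAP_of_autocalibrated
    {Ω E : Type*} [MeasureSpace Ω] [IsProbabilityMeasure (ℙ : Measure Ω)]
    [MeasurableSpace E]
    (Y : Ω → ℝ) (X : Ω → E) (μhat : E → ℝ)
    (hX : Measurable X) (hμ : Measurable μhat)
    (hYnn : ∀ ω, 0 ≤ Y ω) (hYint : Integrable Y ℙ) (hEY : 0 < ∫ ω, Y ω ∂ℙ)
    (hZnn : ∀ ω, 0 ≤ μhat (X ω))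
    (hZint : Integrable (fun ω => μhat (X ω)) ℙ)
    (hcont : Continuous (cdfOf (Measure.map (fun ω => μhat (X ω)) ℙ)))
    (hac : ℙ[Y | MeasurableSpace.comap (fun ω => μhat (X ω)) Real.measurableSpace]
            =ᵐ[ℙ] fun ω => μhat (X ω)) :
    (∫ α in Set.Ioo (0 : ℝ) 1,
        (∫ ω in {ω | leftContInv (cdfOf (Measure.map (fun ω => μhat (X ω)) ℙ)) (1 - α)
                      < μhat (X ω)}, Y ω ∂ℙ) / (∫ ω, Y ω ∂ℙ)) - 1 / 2
      = (∫ ω, μhat (X ω) * cdfOf (Measure.map (fun ω => μhat (X ω)) ℙ) (μhat (X ω)) ∂ℙ)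
          / (∫ ω, Y ω ∂ℙ) - 1 / 2 := by
  have hZ : Measurable (fun ω => μhat (X ω)) := hμ.comp hX
  have key : (∫ α in Set.Ioo (0:ℝ) 1,
      ∫ ω in {ω | leftContInv (cdfOf (Measure.map (fun ω => μhat (X ω)) ℙ)) (1 - α)
                    < μhat (X ω)}, Y ω ∂ℙ)
      = ∫ ω, μhat (X ω) * cdfOf (Measure.map (fun ω => μhat (X ω)) ℙ) (μhat (X ω)) ∂ℙ :=
    main_aux Y (fun ω => μhat (X ω)) hZ hYint hZint hcont hac
  rw [integral_div, key]
end

section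
/- Let Y be a non-negative real-valued random variable with continuous cumulative distribution function F_Y and 0 < E[Y] < ∞. Then the area under the best-possible cumulative accuracy profile satisfies ∫_0^1 CAP_{Y,Y}(alpha) d alpha − 1/2 = (1/E[Y]) E[ Y · F_Y(Y) ] − 1/2. -/
open MeasureTheory ProbabilityTheory

lemma cdfOf_mono_s6 (μ : Measure ℝ) [IsFiniteMeasure μ] : Monotone (cdfOf μ) := fun _ _ hab =>
  ENNReal.toReal_mono (measure_ne_top _ _) (measure_mono (Set.Iic_subset_Iic.2 hab))

lemma cdfOf_tendsto_atBot_s6 (μ : Measure ℝ) [IsProbabilityMeasure μ] :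
    Filter.Tendsto (cdfOf μ) Filter.atBot (nhds 0) := by
  have h1 : Filter.Tendsto (fun y => μ (Set.Iic y)) Filter.atBot (nhds (μ (⋂ y, Set.Iic y))) :=
    tendsto_measure_iInter_atBot (fun _ => (measurableSet_Iic).nullMeasurableSet)
      (fun a b hab => Set.Iic_subset_Iic.2 hab) ⟨0, measure_ne_top _ _⟩
  have h2 : (⋂ y, Set.Iic y : Set ℝ) = ∅ := by
    ext x; simp only [Set.mem_iInter, Set.mem_Iic, Set.mem_empty_iff_false, iff_false, not_forall]
    exact ⟨x - 1, by linarith⟩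
  rw [h2, measure_empty] at h1
  exact (ENNReal.tendsto_toReal (by simp)).comp h1

lemma cdfOf_tendsto_atTop_s6 (μ : Measure ℝ) [IsProbabilityMeasure μ] :
    Filter.Tendsto (cdfOf μ) Filter.atTop (nhds 1) := by
  have h1 := tendsto_measure_Iic_atTop μ
  rw [measure_univ] at h1
  have := (ENNReal.tendsto_toReal ENNReal.one_ne_top).comp h1
  exact this

lemma bddBelow_cdf_set (μ : Measure ℝ) [IsProbabilityMeasure μ] {p : ℝ} (hp : 0 < p) :
    BddBelow {t : ℝ | p ≤ cdfOf μ t} := by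
  obtain ⟨y₀, hy₀⟩ := ((cdfOf_tendsto_atBot_s6 μ).eventually_lt_const hp).exists
  exact ⟨y₀, fun t ht => le_of_not_gt fun h =>
    absurd ht (not_le.2 (lt_of_le_of_lt (cdfOf_mono_s6 μ h.le) hy₀))⟩

lemma nonempty_cdf_set (μ : Measure ℝ) [IsProbabilityMeasure μ] {p : ℝ} (hp : p < 1) :
    {t : ℝ | p ≤ cdfOf μ t}.Nonempty := by
  obtain ⟨y₀, hy₀⟩ := ((cdfOf_tendsto_atTop_s6 μ).eventually_const_lt hp).exists
  exact ⟨y₀, hy₀.le⟩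

lemma leftContInv_lt (μ : Measure ℝ) [IsProbabilityMeasure μ] (hcont : Continuous (cdfOf μ))
    {p y : ℝ} (hp : 0 < p) (hpy : p < cdfOf μ y) : leftContInv (cdfOf μ) p < y := by
  have hev : ∀ᶠ t in nhdsWithin y (Set.Iio y), p < cdfOf μ t :=
    Filter.Eventually.filter_mono nhdsWithin_le_nhds
      (hcont.continuousAt.eventually_const_lt hpy)
  obtain ⟨t, hpt, hty⟩ := (hev.and eventually_mem_nhdsWithin).exists
  exact lt_of_le_of_lt (csInf_le (bddBelow_cdf_set μ hp) hpt.le) hty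

lemma le_cdf_of_leftContInv_lt_s6 (μ : Measure ℝ) [IsProbabilityMeasure μ]
    {p y : ℝ} (hp1 : p < 1) (h : leftContInv (cdfOf μ) p < y) : p ≤ cdfOf μ y := by
  by_contra hc
  push_neg at hc
  have : y ≤ leftContInv (cdfOf μ) p := by
    apply le_csInf (nonempty_cdf_set μ hp1)
    intro t ht
    by_contra hty
    push_neg at hty
    exact absurd (le_trans ht (cdfOf_mono_s6 μ hty.le)) (not_le.2 hc)
  exact absurd h (not_lt.2 this)

/-- **Area under the best-possible CAP curve.**
Let `Y` be a non-negative real-valued random variable with continuous CDF `F_Y` and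
`0 < E[Y] < ∞`. Then `∫_0^1 CAP_{Y,Y}(α) dα − 1/2 = (1/E[Y]) E[Y · F_Y(Y)] − 1/2`,
where `CAP_{Y,Y}(α) = (1/E[Y]) E[Y · 1{Y > F_Y⁻¹(1−α)}]`. -/
theorem area_under_best_CAP
    {Ω : Type*} [MeasureSpace Ω] [IsProbabilityMeasure (ℙ : Measure Ω)]
    (Y : Ω → ℝ) (hYmeas : Measurable Y) (hYnn : ∀ ω, 0 ≤ Y ω)
    (hYint : Integrable Y ℙ) (hEY : 0 < ∫ ω, Y ω ∂ℙ)
    (hcont : Continuous (cdfOf (Measure.map Y ℙ))) :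
    (∫ α in Set.Ioo (0 : ℝ) 1,
        (∫ ω in {ω | leftContInv (cdfOf (Measure.map Y ℙ)) (1 - α) < Y ω}, Y ω ∂ℙ)
          / (∫ ω, Y ω ∂ℙ)) - 1 / 2
      = (∫ ω, Y ω * cdfOf (Measure.map Y ℙ) (Y ω) ∂ℙ) / (∫ ω, Y ω ∂ℙ) - 1 / 2 := by
  have hprob : IsProbabilityMeasure (Measure.map Y ℙ) :=
    Measure.isProbabilityMeasure_map hYmeas.aemeasurable
  set F : ℝ → ℝ := cdfOf (Measure.map Y ℙ) with hFdef
  have hF0 : ∀ y, 0 ≤ F y := fun y => ENNReal.toReal_nonneg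
  have hF1 : ∀ y, F y ≤ 1 := by
    intro y
    have := ENNReal.toReal_mono ENNReal.one_ne_top
      (prob_le_one (μ := Measure.map Y ℙ) (s := Set.Iic y))
    exact this
  have hFmeas : Measurable F := hcont.measurable
  have key : (∫ α in Set.Ioo (0:ℝ) 1, ∫ ω in {ω | leftContInv F (1 - α) < Y ω}, Y ω ∂ℙ)
      = ∫ ω, Y ω * F (Y ω) ∂ℙ := by
    set ν := (volume.restrict (Set.Ioo (0:ℝ) 1)).prod (ℙ : Measure Ω) with hν
    set SB : Set (ℝ × Ω) := {z | 1 - z.1 < F (Y z.2)} with hSB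
    have hSBm : MeasurableSet SB :=
      measurableSet_lt (measurable_const.sub measurable_fst)
        ((hFmeas.comp hYmeas).comp measurable_snd)
    set kB : ℝ × Ω → ENNReal := SB.indicator (fun z => ENNReal.ofReal (Y z.2)) with hkB
    have hkBm : Measurable kB :=
      (ENNReal.measurable_ofReal.comp (hYmeas.comp measurable_snd)).indicator hSBm
    set SA : Set (ℝ × Ω) := {z | leftContInv F (1 - z.1) < Y z.2} with hSA
    set kA : ℝ × Ω → ENNReal := SA.indicator (fun z => ENNReal.ofReal (Y z.2)) with hkA
    set N : Set (ℝ × Ω) := {z | 1 - z.1 = F (Y z.2)} with hNdef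
    have hNm : MeasurableSet N :=
      measurableSet_eq_fun (measurable_const.sub measurable_fst)
        ((hFmeas.comp hYmeas).comp measurable_snd)
    have hνN : ν N = 0 := by
      rw [hν, Measure.prod_apply_symm hNm]
      have hnull : ∀ ω : Ω, (volume.restrict (Set.Ioo (0:ℝ) 1)) ((fun α => (α, ω)) ⁻¹' N) = 0 := by
        intro ω
        apply measure_mono_null (t := {1 - F (Y ω)})
        · intro α hα
          simp only [Set.mem_preimage, hNdef, Set.mem_setOf_eq] at hα
          simp only [Set.mem_singleton_iff]
          linarith
        · exact le_antisymm
            (le_trans (Measure.le_iff'.1 Measure.restrict_le_self _) (by simp)) (zero_le)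
      simp [hnull]
    have hstrip : ν ((Set.Ioo (0:ℝ) 1)ᶜ ×ˢ (Set.univ : Set Ω)) = 0 := by
      rw [hν, Measure.prod_prod, Measure.restrict_apply' measurableSet_Ioo]
      simp
    have hAB : kA =ᵐ[ν] kB := by
      have hgood : ∀ᵐ z ∂ν, z ∉ N ∪ (Set.Ioo (0:ℝ) 1)ᶜ ×ˢ (Set.univ : Set Ω) := by
        rw [ae_iff]
        refine measure_mono_null ?_ (measure_union_null hνN hstrip)
        intro z hz
        exact not_not.1 hz
      filter_upwards [hgood] with z hz
      simp only [Set.mem_union, not_or] at hz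
      obtain ⟨hzN, hzS⟩ := hz
      have hz1 : z.1 ∈ Set.Ioo (0:ℝ) 1 := by
        by_contra h
        exact hzS (Set.mem_prod.2 ⟨h, Set.mem_univ _⟩)
      have hne : 1 - z.1 ≠ F (Y z.2) := fun h => hzN h
      have hiff : (z ∈ SA) ↔ (z ∈ SB) := by
        simp only [hSA, hSB, Set.mem_setOf_eq]
        constructor
        · intro h
          exact lt_of_le_of_ne
            (le_cdf_of_leftContInv_lt_s6 _ (by linarith [hz1.1] : 1 - z.1 < 1) h) hne
        · intro h
          exact leftContInv_lt _ hcont (by linarith [hz1.2]) h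
      by_cases h : z ∈ SA
      · rw [hkA, hkB, Set.indicator_of_mem h, Set.indicator_of_mem (hiff.1 h)]
      · rw [hkA, hkB, Set.indicator_of_notMem h,
          Set.indicator_of_notMem (fun hb => h (hiff.2 hb))]
    have hgBm : Measurable (fun α => ∫⁻ ω, kB (α, ω) ∂ℙ) := hkBm.lintegral_prod_right'
    have hsections : ∀ᵐ α ∂(volume.restrict (Set.Ioo (0:ℝ) 1)),
        (∫⁻ ω, kA (α, ω) ∂ℙ) = ∫⁻ ω, kB (α, ω) ∂ℙ := by
      filter_upwards [Measure.ae_ae_of_ae_prod hAB] with α hα using lintegral_congr_ae hα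
    have hfin : ∀ α : ℝ, (∫⁻ ω, kA (α, ω) ∂ℙ) ≠ ⊤ := by
      intro α
      have hle : (∫⁻ ω, kA (α, ω) ∂ℙ) ≤ ∫⁻ ω, ENNReal.ofReal (Y ω) ∂ℙ :=
        lintegral_mono fun ω => Set.indicator_le_self _ _ (α, ω)
      exact (lt_of_le_of_lt hle hYint.lintegral_lt_top).ne
    have hsec : ∀ ω : Ω, (∫⁻ α in Set.Ioo (0:ℝ) 1, kB (α, ω))
        = ENNReal.ofReal (Y ω * F (Y ω)) := by
      intro ω
      have h1 : (fun α : ℝ => kB (α, ω))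
          = (Set.Ioi (1 - F (Y ω))).indicator (fun _ => ENNReal.ofReal (Y ω)) := by
        funext α
        by_cases h : 1 - α < F (Y ω)
        · rw [Set.indicator_of_mem (by simp only [Set.mem_Ioi]; linarith), hkB,
            Set.indicator_of_mem (by exact h)]
        · rw [Set.indicator_of_notMem (by simp only [Set.mem_Ioi]; intro hc; exact h (by linarith)),
            hkB, Set.indicator_of_notMem (by exact h)]
      rw [h1, lintegral_indicator measurableSet_Ioi _, setLIntegral_const,
        Measure.restrict_apply measurableSet_Ioi]
      have h2 : Set.Ioi (1 - F (Y ω)) ∩ Set.Ioo (0:ℝ) 1 = Set.Ioo (1 - F (Y ω)) 1 := by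
        ext α
        simp only [Set.mem_inter_iff, Set.mem_Ioi, Set.mem_Ioo]
        constructor
        · rintro ⟨h1', h2', h3'⟩; exact ⟨h1', h3'⟩
        · rintro ⟨h1', h2'⟩
          have := hF1 (Y ω)
          exact ⟨h1', by linarith, h2'⟩
      rw [h2, Real.volume_Ioo, sub_sub_cancel, ← ENNReal.ofReal_mul (hYnn ω)]
    have hinner : ∀ α : ℝ, (∫ ω in {ω | leftContInv F (1 - α) < Y ω}, Y ω ∂ℙ)
        = (∫⁻ ω, kA (α, ω) ∂ℙ).toReal := by
      intro α
      have hAm : MeasurableSet {ω | leftContInv F (1 - α) < Y ω} :=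
        measurableSet_lt measurable_const hYmeas
      rw [integral_eq_lintegral_of_nonneg_ae (Filter.Eventually.of_forall fun ω => hYnn ω)
        hYint.restrict.aestronglyMeasurable]
      congr 1
      rw [← lintegral_indicator hAm _]
      congr 1
    have hashy : AEStronglyMeasurable (fun α => (∫⁻ ω, kA (α, ω) ∂ℙ).toReal)
        (volume.restrict (Set.Ioo (0:ℝ) 1)) := by
      refine (hgBm.ennreal_toReal.aemeasurable.congr ?_).aestronglyMeasurable
      filter_upwards [hsections] with α hα
      rw [hα]
    have hout : (∫ α in Set.Ioo (0:ℝ) 1, ∫ ω in {ω | leftContInv F (1 - α) < Y ω}, Y ω ∂ℙ)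
        = (∫⁻ α in Set.Ioo (0:ℝ) 1, ∫⁻ ω, kA (α, ω) ∂ℙ).toReal := by
      calc (∫ α in Set.Ioo (0:ℝ) 1, ∫ ω in {ω | leftContInv F (1 - α) < Y ω}, Y ω ∂ℙ)
          = ∫ α in Set.Ioo (0:ℝ) 1, (∫⁻ ω, kA (α, ω) ∂ℙ).toReal := by
            exact integral_congr_ae (Filter.Eventually.of_forall fun α => hinner α)
        _ = (∫⁻ α in Set.Ioo (0:ℝ) 1, ENNReal.ofReal ((∫⁻ ω, kA (α, ω) ∂ℙ).toReal)).toReal :=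
            integral_eq_lintegral_of_nonneg_ae
              (Filter.Eventually.of_forall fun α => ENNReal.toReal_nonneg) hashy
        _ = (∫⁻ α in Set.Ioo (0:ℝ) 1, ∫⁻ ω, kA (α, ω) ∂ℙ).toReal := by
            congr 1
            exact lintegral_congr fun α => ENNReal.ofReal_toReal (hfin α)
    have hswap : (∫⁻ α in Set.Ioo (0:ℝ) 1, ∫⁻ ω, kB (α, ω) ∂ℙ)
        = ∫⁻ ω, ∫⁻ α in Set.Ioo (0:ℝ) 1, kB (α, ω) ∂ℙ := by
      rw [← lintegral_prod kB hkBm.aemeasurable, lintegral_prod_symm kB hkBm.aemeasurable]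
    have hRHS : (∫ ω, Y ω * F (Y ω) ∂ℙ)
        = (∫⁻ ω, ENNReal.ofReal (Y ω * F (Y ω)) ∂ℙ).toReal :=
      integral_eq_lintegral_of_nonneg_ae
        (Filter.Eventually.of_forall fun ω => mul_nonneg (hYnn ω) (hF0 _))
        ((hYmeas.mul (hFmeas.comp hYmeas)).aestronglyMeasurable)
    rw [hout, hRHS]
    congr 1
    calc (∫⁻ α in Set.Ioo (0:ℝ) 1, ∫⁻ ω, kA (α, ω) ∂ℙ)
        = ∫⁻ α in Set.Ioo (0:ℝ) 1, ∫⁻ ω, kB (α, ω) ∂ℙ := lintegral_congr_ae hsections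
      _ = ∫⁻ ω, ∫⁻ α in Set.Ioo (0:ℝ) 1, kB (α, ω) ∂ℙ := hswap
      _ = ∫⁻ ω, ENNReal.ofReal (Y ω * F (Y ω)) ∂ℙ := lintegral_congr fun ω => hsec ω
  rw [integral_div, key]
end
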